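/- If A = (μ_A, λ_A) and B = (μ_B, λ_B) are intuitionistic fuzzy Lie ideals of an n-Lie algebra L, then their sum A + B, defined by μ_{A+B}(x) = sup_{x=a+b} min(μ_A(a), μ_B(b)) and λ_{A+B}(x) = inf_{x=a+b} max(λ_A(a), λ_B(b)), is an intuitionistic fuzzy Lie ideal of L. -/

import Mathlib

open Function

/-- An `n`-Lie algebra structure (Filippov algebra) on a module `L` over a field `F`:
an `n`-linear bracket that is skew-symmetric and satisfies the Filippov identity. -/
structure NLieAlgebra (F : Type*) [Field F] (n : ℕ) [NeZero n] (L : Type*)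
    [AddCommGroup L] [Module F L] where
  bracket : MultilinearMap F (fun _ : Fin n => L) L
  skew : ∀ (σ : Equiv.Perm (Fin n)) (x : Fin n → L),
    bracket (x ∘ σ) = (Equiv.Perm.sign σ : ℤ) • bracket x
  filippov : ∀ (x y : Fin n → L),
    bracket (Function.update y 0 (bracket x)) =
      ∑ i : Fin n, bracket (Function.update x i (bracket (Function.update y 0 (x i))))

/-- `(μ, lam)` is an intuitionistic fuzzy set: both take values in `[0,1]` and `μ + lam ≤ 1`. -/
def IsIFS {L : Type*} (μ lam : L → ℝ) : Prop :=
  ∀ x, 0 ≤ μ x ∧ μ x ≤ 1 ∧ 0 ≤ lam x ∧ lam x ≤ 1 ∧ μ x + lam x ≤ 1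

/-- Intuitionistic fuzzy Lie subalgebra of an `n`-Lie algebra. -/
def IsIFSubalgebra {F : Type*} [Field F] {n : ℕ} [NeZero n] {L : Type*}
    [AddCommGroup L] [Module F L] (A : NLieAlgebra F n L) (μ lam : L → ℝ) : Prop :=
  IsIFS μ lam ∧
  (∀ x y : L, μ (x + y) ≥ min (μ x) (μ y)) ∧
  (∀ x y : L, lam (x + y) ≤ max (lam x) (lam y)) ∧
  (∀ (α : F) (x : L), μ (α • x) ≥ μ x) ∧
  (∀ (α : F) (x : L), lam (α • x) ≤ lam x) ∧
  (∀ x : Fin n → L, μ (A.bracket x) ≥ ⨅ i, μ (x i)) ∧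
  (∀ x : Fin n → L, lam (A.bracket x) ≤ ⨆ i, lam (x i))

/-- Intuitionistic fuzzy Lie ideal of an `n`-Lie algebra. -/
def IsIFIdeal {F : Type*} [Field F] {n : ℕ} [NeZero n] {L : Type*}
    [AddCommGroup L] [Module F L] (A : NLieAlgebra F n L) (μ lam : L → ℝ) : Prop :=
  IsIFS μ lam ∧
  (∀ x y : L, μ (x + y) ≥ min (μ x) (μ y)) ∧
  (∀ x y : L, lam (x + y) ≤ max (lam x) (lam y)) ∧
  (∀ (α : F) (x : L), μ (α • x) ≥ μ x) ∧
  (∀ (α : F) (x : L), lam (α • x) ≤ lam x) ∧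
  (∀ x : Fin n → L, μ (A.bracket x) ≥ ⨆ i, μ (x i)) ∧
  (∀ x : Fin n → L, lam (A.bracket x) ≤ ⨅ i, lam (x i))

/-- A (crisp) `n`-Lie subalgebra: a linear subspace closed under the bracket. -/
def IsNLieSubalgebra {F : Type*} [Field F] {n : ℕ} [NeZero n] {L : Type*}
    [AddCommGroup L] [Module F L] (A : NLieAlgebra F n L) (S : Set L) : Prop :=
  (0 : L) ∈ S ∧ (∀ x y : L, x ∈ S → y ∈ S → x + y ∈ S) ∧
  (∀ (α : F) (x : L), x ∈ S → α • x ∈ S) ∧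
  (∀ x : Fin n → L, (∀ i, x i ∈ S) → A.bracket x ∈ S)

/-- A (crisp) ideal of an `n`-Lie algebra: a linear subspace `I` such that
`[x_1, …, x_n] ∈ I` whenever some `x_i ∈ I`. -/
def IsNLieIdeal {F : Type*} [Field F] {n : ℕ} [NeZero n] {L : Type*}
    [AddCommGroup L] [Module F L] (A : NLieAlgebra F n L) (S : Set L) : Prop :=
  (0 : L) ∈ S ∧ (∀ x y : L, x ∈ S → y ∈ S → x + y ∈ S) ∧
  (∀ (α : F) (x : L), x ∈ S → α • x ∈ S) ∧
  (∀ x : Fin n → L, (∃ i, x i ∈ S) → A.bracket x ∈ S)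

lemma aux_min_sup {α β : Type*} [Nonempty α] [Nonempty β] (p : α → ℝ) (q : β → ℝ) {C : ℝ}
    (h : ∀ a b, min (p a) (q b) ≤ C) : min (⨆ a, p a) (⨆ b, q b) ≤ C := by
  by_contra hlt
  push_neg at hlt
  obtain ⟨a, ha⟩ := exists_lt_of_lt_ciSup (lt_of_lt_of_le hlt (min_le_left _ _))
  obtain ⟨b, hb⟩ := exists_lt_of_lt_ciSup (lt_of_lt_of_le hlt (min_le_right _ _))
  exact absurd (h a b) (not_le.2 (lt_min ha hb))

lemma aux_max_inf {α β : Type*} [Nonempty α] [Nonempty β] (p : α → ℝ) (q : β → ℝ) {C : ℝ}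
    (h : ∀ a b, C ≤ max (p a) (q b)) : C ≤ max (⨅ a, p a) (⨅ b, q b) := by
  by_contra hlt
  push_neg at hlt
  obtain ⟨a, ha⟩ := exists_lt_of_ciInf_lt (lt_of_le_of_lt (le_max_left _ _) hlt)
  obtain ⟨b, hb⟩ := exists_lt_of_ciInf_lt (lt_of_le_of_lt (le_max_right _ _) hlt)
  exact absurd (h a b) (not_le.2 (max_lt ha hb))

theorem stmt10 {F : Type*} [Field F] {n : ℕ} [NeZero n] (hn : 2 ≤ n)
    {L : Type*} [AddCommGroup L] [Module F L] (A : NLieAlgebra F n L)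
    (μA lamA μB lamB : L → ℝ)
    (hA : IsIFIdeal A μA lamA) (hB : IsIFIdeal A μB lamB) :
    IsIFIdeal A (fun x => ⨆ a : L, min (μA a) (μB (x - a)))
                (fun x => ⨅ a : L, max (lamA a) (lamB (x - a))) := by
  
  classical
  obtain ⟨hAifs, hAadd, hAladd, hAsmul, hAlsmul, hAbr, hAlbr⟩ := hA
  obtain ⟨hBifs, hBadd, hBladd, hBsmul, hBlsmul, hBbr, hBlbr⟩ := hB
  set f : L → ℝ := fun x => ⨆ a : L, min (μA a) (μB (x - a)) with hf
  set g : L → ℝ := fun x => ⨅ a : L, max (lamA a) (lamB (x - a)) with hg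
  have hbA : ∀ x : L, BddAbove (Set.range fun a : L => min (μA a) (μB (x - a))) := fun x =>
    ⟨1, by rintro _ ⟨a, rfl⟩; exact min_le_of_left_le (hAifs a).2.1⟩
  have hbB : ∀ x : L, BddBelow (Set.range fun a : L => max (lamA a) (lamB (x - a))) := fun x =>
    ⟨0, by rintro _ ⟨a, rfl⟩; exact le_max_of_le_left (hAifs a).2.2.1⟩
  have hfle : ∀ x a, min (μA a) (μB (x - a)) ≤ f x := fun x a => le_ciSup (hbA x) a
  have hgle : ∀ x a, g x ≤ max (lamA a) (lamB (x - a)) := fun x a => ciInf_le (hbB x) a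
  -- bracket algebra helper
  have hbr : ∀ (x : Fin n → L) (i : Fin n) (a : L),
      A.bracket x - A.bracket (Function.update x i a)
        = A.bracket (Function.update x i (x i - a)) := by
    intro x i a
    have h1 : A.bracket (Function.update x i (a + (x i - a))) =
        A.bracket (Function.update x i a) + A.bracket (Function.update x i (x i - a)) :=
      A.bracket.map_update_add x i a (x i - a)
    have h2 : a + (x i - a) = x i := by abel
    rw [h2, Function.update_eq_self] at h1
    rw [h1, add_sub_cancel_left]
  refine ⟨?_, ?_, ?_, ?_, ?_, ?_, ?_⟩
  · -- IsIFS
    intro x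
    have h0f : (0 : ℝ) ≤ f x :=
      le_trans (le_min (hAifs 0).1 (hBifs (x - 0)).1) (hfle x 0)
    have hf1 : f x ≤ 1 := ciSup_le fun a => min_le_of_left_le (hAifs a).2.1
    have h0g : (0 : ℝ) ≤ g x := le_ciInf fun a => le_max_of_le_left (hAifs a).2.2.1
    have hg1 : g x ≤ 1 := le_trans (hgle x 0) (max_le (hAifs 0).2.2.2.1 (hBifs (x - 0)).2.2.2.1)
    refine ⟨h0f, hf1, h0g, hg1, ?_⟩
    have : f x ≤ 1 - g x := by
      refine ciSup_le fun a => ?_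
      have hga := hgle x a
      have hsum : min (μA a) (μB (x - a)) + max (lamA a) (lamB (x - a)) ≤ 1 := by
        rcases le_total (lamA a) (lamB (x - a)) with h | h
        · rw [max_eq_right h]
          have := (hBifs (x - a)).2.2.2.2
          have := min_le_right (μA a) (μB (x - a))
          linarith
        · rw [max_eq_left h]
          have := (hAifs a).2.2.2.2
          have := min_le_left (μA a) (μB (x - a))
          linarith
      linarith
    linarith
  · -- additivity μ
    intro x y
    refine aux_min_sup _ _ fun a b => ?_
    refine le_trans ?_ (hfle (x + y) (a + b))
    have h1 : min (min (μA a) (μB (x - a))) (min (μA b) (μB (y - b))) ≤ μA (a + b) :=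
      le_trans (min_le_min (min_le_left _ _) (min_le_left _ _)) (hAadd a b)
    have h2 : min (min (μA a) (μB (x - a))) (min (μA b) (μB (y - b))) ≤ μB (x + y - (a + b)) := by
      have heq : x + y - (a + b) = (x - a) + (y - b) := by abel
      rw [heq]
      exact le_trans (min_le_min (min_le_right _ _) (min_le_right _ _)) (hBadd _ _)
    exact le_min h1 h2
  · -- additivity lam
    intro x y
    refine aux_max_inf _ _ fun a b => ?_
    refine le_trans (hgle (x + y) (a + b)) ?_
    have h1 : lamA (a + b) ≤ max (max (lamA a) (lamB (x - a))) (max (lamA b) (lamB (y - b))) :=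
      le_trans (hAladd a b) (max_le_max (le_max_left _ _) (le_max_left _ _))
    have h2 : lamB (x + y - (a + b)) ≤
        max (max (lamA a) (lamB (x - a))) (max (lamA b) (lamB (y - b))) := by
      have heq : x + y - (a + b) = (x - a) + (y - b) := by abel
      rw [heq]
      exact le_trans (hBladd _ _) (max_le_max (le_max_right _ _) (le_max_right _ _))
    exact max_le h1 h2
  · -- scalar μ
    intro α x
    refine ciSup_le fun a => ?_
    refine le_trans ?_ (hfle (α • x) (α • a))
    have heq : α • x - α • a = α • (x - a) := (smul_sub α x a).symm
    rw [heq]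
    exact min_le_min (hAsmul α a) (hBsmul α (x - a))
  · -- scalar lam
    intro α x
    refine le_ciInf fun a => ?_
    refine le_trans (hgle (α • x) (α • a)) ?_
    have heq : α • x - α • a = α • (x - a) := (smul_sub α x a).symm
    rw [heq]
    exact max_le_max (hAlsmul α a) (hBlsmul α (x - a))
  · -- bracket μ
    intro x
    refine ciSup_le fun i => ?_
    refine ciSup_le fun a => ?_
    refine le_trans ?_ (hfle (A.bracket x) (A.bracket (Function.update x i a)))
    refine le_min ?_ ?_
    · refine le_trans ?_ (le_trans (le_ciSup ((Set.finite_range _).bddAbove) i) (hAbr (Function.update x i a)))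
      simp [min_le_left]
    · rw [hbr x i a]
      refine le_trans ?_ (le_trans (le_ciSup ((Set.finite_range _).bddAbove) i) (hBbr (Function.update x i (x i - a))))
      simp [min_le_right]
  · -- bracket lam
    intro x
    refine le_ciInf fun i => ?_
    refine le_ciInf fun a => ?_
    refine le_trans (hgle (A.bracket x) (A.bracket (Function.update x i a))) ?_
    refine max_le ?_ ?_
    · refine le_trans (le_trans (hAlbr (Function.update x i a)) (ciInf_le ((Set.finite_range _).bddBelow) i)) ?_
      simp [le_max_left]
    · rw [hbr x i a]
      refine le_trans (le_trans (hBlbr (Function.update x i (x i - a))) (ciInf_le ((Set.finite_range _).bddBelow) i)) ?_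
      simp [le_max_right]
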